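/- There exist parameters θ : Fin 3 → ℝ and values q : Fin 3 → ℝ such that the cross-entropy softmax update strictly decreases the expected value. Concretely, take θ = (10, 0, 0) and q = (0.99, 1, 0), so that the second action uniquely maximizes q; let π = softmax θ and define θ'(a) = θ(a) + (𝟙[a = a₂] − π(a)) (cross-entropy update with learning rate 1 toward the q-maximizing action a₂). Then ∑_a softmax θ' (a) · q(a) < ∑_a softmax θ (a) · q(a). -/

import Mathlib

noncomputable def softmax {A : Type*} [Fintype A] (θ : A → ℝ) (a : A) : ℝ :=
  Real.exp (θ a) / ∑ b, Real.exp (θ b)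

/-- The cross-entropy softmax update may strictly decrease the expected value. -/
theorem ce_update_may_decrease_value :
    let θ : Fin 3 → ℝ := ![10, 0, 0]
    let q : Fin 3 → ℝ := ![0.99, 1, 0]
    let θ' : Fin 3 → ℝ := fun a => θ a + ((if a = 1 then (1 : ℝ) else 0) - softmax θ a)
    (∀ a : Fin 3, a ≠ 1 → q a < q 1) ∧
    ∑ a, softmax θ' a * q a < ∑ a, softmax θ a * q a := by
  intro θ q θ'
  constructor
  · intro a ha
    fin_cases a <;> simp_all [q] <;> norm_num
  · simp only [softmax, Fin.sum_univ_three, θ, θ', q]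
    norm_num [show (2 : Fin 3) ≠ 1 by decide, Matrix.cons_val_two]
    set E : ℝ := Real.exp 10 with hEdef
    set e : ℝ := Real.exp 1 with hedef
    have hEpos : (0:ℝ) < E := Real.exp_pos _
    have hepos : (0:ℝ) < e := Real.exp_pos _
    have hE : (1024:ℝ) ≤ E := by
      have h2 : (2:ℝ) ≤ e := by have := Real.add_one_le_exp (1:ℝ); linarith
      have hpow : E = e ^ (10:ℕ) := by
        rw [hEdef, hedef, ← Real.exp_nat_mul]; norm_num
      calc (1024:ℝ) = 2 ^ (10:ℕ) := by norm_num
        _ ≤ e ^ (10:ℕ) := pow_le_pow_left₀ (by norm_num) h2 10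
        _ = E := hpow.symm
    have he1 : e < 2.7182818286 := Real.exp_one_lt_d9
    set t : ℝ := (E - 1) / (E + 1 + 1) with htdef
    set C : ℝ := Real.exp (-(E + 1 + 1)⁻¹) with hCdef
    set D : ℝ := Real.exp (-t) with hDdef
    have hCpos : (0:ℝ) < C := Real.exp_pos _
    have hDpos : (0:ℝ) < D := Real.exp_pos _
    have ht : (1.99:ℝ) ≤ Real.exp t := by
      have h1 : (0.99:ℝ) ≤ t := by
        rw [htdef, le_div_iff₀ (by linarith)]; linarith
      have h2 := Real.add_one_le_exp t
      linarith
    have hD1 : D * Real.exp t = 1 := by rw [hDdef, ← Real.exp_add]; simp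
    have hD199 : D * 1.99 ≤ 1 := by
      calc D * 1.99 ≤ D * Real.exp t := by nlinarith
        _ = 1 := hD1
    -- rewrite the exponentials
    have h1 : Real.exp (10 + -(E / (E + 1 + 1))) = E * D * C := by
      rw [hEdef, hDdef, hCdef, ← Real.exp_add, ← Real.exp_add, htdef]
      congr 1
      field_simp
      ring
    have h2 : Real.exp (1 - (E + 1 + 1)⁻¹) = e * C := by
      rw [hedef, hCdef, ← Real.exp_add]
      congr 1
    rw [h1, h2]
    have hS : (0:ℝ) < E * D * C + e * C + C := by positivity
    have hE2 : (0:ℝ) < E + 1 + 1 := by linarith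
    rw [show E * D * C / (E * D * C + e * C + C) * (99 / 100) +
          e * C / (E * D * C + e * C + C)
        = (E * D * C * (99 / 100) + e * C) / (E * D * C + e * C + C) by ring,
      show E / (E + 1 + 1) * (99 / 100) + (E + 1 + 1)⁻¹
        = (E * (99 / 100) + 1) / (E + 1 + 1) by ring,
      div_lt_div_iff₀ hS hE2]
    have key : 0.98 * (E * D) + 0.01 * (e * E) + e < 0.99 * E + 1 := by
      nlinarith [mul_le_mul_of_nonneg_left hD199 hEpos.le]
    nlinarith [mul_lt_mul_of_pos_left key hCpos, mul_pos (mul_pos hEpos hDpos) hCpos]
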